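/- There is no AGM contraction operator ÷ over an unbiased set of epistemic states (with |Ω| ≥ 2) satisfying: if ¬α ⊨ β, then Ψ ÷ β ⊨ γ implies Ψ ÷ α ÷ β ⊨ γ (postulate IC1_⇐). -/
import Mathlib


inductive Form (V : Type) : Type
  | var : V → Form V
  | falsum : Form V
  | imp : Form V → Form V → Form V

namespace Form

def eval {V : Type} (w : V → Bool) : Form V → Bool
  | var v => w v
  | falsum => false
  | imp a b => !(eval w a) || eval w b

def neg {V : Type} (a : Form V) : Form V := imp a falsum

def top {V : Type} : Form V := neg falsum

def conj {V : Type} (a b : Form V) : Form V := neg (imp a (neg b))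

end Form

/-- Worlds (propositional interpretations) over the signature `V`. -/
abbrev World (V : Type) := V → Bool

/-- Models of a single formula. -/
def FMod {V : Type} (a : Form V) : Set (World V) := {w | a.eval w = true}

/-- Models of a set of formulas. -/
def SMod {V : Type} (X : Set (Form V)) : Set (World V) := {w | ∀ a ∈ X, a.eval w = true}

/-- Deductive closure (consequence operator). -/
def Cn {V : Type} (X : Set (Form V)) : Set (Form V) := {b | ∀ w ∈ SMod X, b.eval w = true}

/-- Minimal elements of a set of worlds w.r.t. a relation. -/
def minSet {V : Type} (S : Set (World V)) (r : World V → World V → Prop) : Set (World V) :=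
  {w ∈ S | ∀ w' ∈ S, r w w'}

/-- Total preorder: total (hence reflexive) and transitive. -/
def TotalPre {V : Type} (r : World V → World V → Prop) : Prop :=
  (∀ x y, r x y ∨ r y x) ∧ (∀ x y z, r x y → r y z → r x z)

/-- A belief change operator over epistemic states `E`: each state has a
deductively closed belief set, and the operator maps a state and a formula to a state. -/
structure BCO (V E : Type) where
  Bel : E → Set (Form V)
  closed : ∀ Ψ, Cn (Bel Ψ) = Bel Ψ
  op : E → Form V → E

/-- Models of (the belief set of) an epistemic state. -/
def stMod {V E : Type} (O : BCO V E) (Ψ : E) : Set (World V) := SMod (O.Bel Ψ)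

/-- Faithful assignment: each `le Ψ` is a total preorder; models of `Ψ` are mutually
equivalent and strictly below non-models. -/
def Faithful {V E : Type} (O : BCO V E) (le : E → World V → World V → Prop) : Prop :=
  (∀ Ψ, TotalPre (le Ψ)) ∧
  (∀ Ψ w₁ w₂, w₁ ∈ stMod O Ψ → w₂ ∈ stMod O Ψ → le Ψ w₁ w₂) ∧
  (∀ Ψ w₁ w₂, w₁ ∈ stMod O Ψ → w₂ ∉ stMod O Ψ → (le Ψ w₁ w₂ ∧ ¬ le Ψ w₂ w₁))

/-- Contraction-compatibility: `[[Ψ ÷ α]] = [[Ψ]] ∪ min([[¬α]], ≤_Ψ)`. -/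
def ContrCompat {V E : Type} (O : BCO V E) (le : E → World V → World V → Prop) : Prop :=
  ∀ Ψ (α : Form V), stMod O (O.op Ψ α) = stMod O Ψ ∪ minSet (FMod α.neg) (le Ψ)

/-- Revision-compatibility: `[[Ψ * α]] = min([[α]], ≤_Ψ)`. -/
def RevCompat {V E : Type} (O : BCO V E) (le : E → World V → World V → Prop) : Prop :=
  ∀ Ψ (α : Form V), stMod O (O.op Ψ α) = minSet (FMod α) (le Ψ)

/-- The AGM contraction postulates (C1)–(C7) for epistemic states. -/
def AGMContr {V E : Type} (O : BCO V E) : Prop :=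
  (∀ Ψ α, O.Bel (O.op Ψ α) ⊆ O.Bel Ψ) ∧
  (∀ Ψ α, α ∉ O.Bel Ψ → O.Bel Ψ ⊆ O.Bel (O.op Ψ α)) ∧
  (∀ Ψ (α : Form V), ¬ (∀ w, w ∈ FMod α) → α ∉ O.Bel (O.op Ψ α)) ∧
  (∀ Ψ α, O.Bel Ψ ⊆ Cn (O.Bel (O.op Ψ α) ∪ {α})) ∧
  (∀ Ψ α β, FMod α = FMod β → O.Bel (O.op Ψ α) = O.Bel (O.op Ψ β)) ∧
  (∀ Ψ (α β : Form V), O.Bel (O.op Ψ α) ∩ O.Bel (O.op Ψ β) ⊆ O.Bel (O.op Ψ (α.conj β))) ∧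
  (∀ Ψ (α β : Form V), β ∉ O.Bel (O.op Ψ (α.conj β)) → O.Bel (O.op Ψ (α.conj β)) ⊆ O.Bel (O.op Ψ β))

/-- Unbiasedness: every consistent set of formulas has an epistemic state whose
belief set is its deductive closure. -/
def Unbiased {V E : Type} (O : BCO V E) : Prop :=
  ∀ L : Set (Form V), (SMod L).Nonempty → ∃ Ψ : E, O.Bel Ψ = Cn L


def bigConj {V : Type} : List (Form V) → Form V
  | [] => Form.top
  | a :: l => a.conj (bigConj l)

lemma eval_neg {V : Type} (a : Form V) (w : World V) : a.neg.eval w = !a.eval w := by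
  simp [Form.neg, Form.eval]

lemma eval_conj {V : Type} (a b : Form V) (w : World V) :
    (a.conj b).eval w = (a.eval w && b.eval w) := by
  simp [Form.conj, Form.neg, Form.eval]

lemma eval_bigConj {V : Type} (l : List (Form V)) (w : World V) :
    (bigConj l).eval w = true ↔ ∀ a ∈ l, a.eval w = true := by
  induction l with
  | nil => simp [bigConj, Form.top, Form.neg, Form.eval]
  | cons a l ih => simp [bigConj, eval_conj, ih]

noncomputable def descr {V : Type} [Fintype V] (w : World V) : Form V :=
  bigConj (Finset.univ.toList.map fun v => if w v then Form.var v else (Form.var v).neg)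

lemma eval_descr {V : Type} [Fintype V] [DecidableEq V] (w w' : World V) :
    (descr w).eval w' = true ↔ w' = w := by
  rw [descr, eval_bigConj]
  constructor
  · intro h
    funext v
    have hv := h _ (List.mem_map.2 ⟨v, by simp, rfl⟩)
    by_cases hwv : w v <;> simp [hwv, Form.eval, eval_neg] at hv <;> simp [hv, hwv]
  · rintro rfl a ha
    obtain ⟨v, -, rfl⟩ := List.mem_map.1 ha
    by_cases hv : w' v <;> simp [hv, Form.eval, eval_neg]

/-- no AGM contraction operator over an unbiased set of epistemic
states (with at least two worlds) satisfies (IC1_⇐). -/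
theorem stmt_9 {V E : Type} [Fintype V] [DecidableEq V]
    (h2 : 2 ≤ Fintype.card (World V)) (O : BCO V E)
    (hA : AGMContr O) (hU : Unbiased O) :
    ¬ (∀ (Ψ : E) (α β γ : Form V), FMod α.neg ⊆ FMod β →
        γ ∈ O.Bel (O.op Ψ β) → γ ∈ O.Bel (O.op (O.op Ψ α) β)) := by
  intro hIC
  obtain ⟨w1, w2, hne⟩ := Fintype.exists_pair_of_one_lt_card
    (show 1 < Fintype.card (World V) by omega)
  have hfun : ∃ v, w1 v ≠ w2 v := by
    by_contra h
    push_neg at h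
    exact hne (funext h)
  obtain ⟨v, hv⟩ := hfun
  -- γ : a literal true at w1, false at w2
  set γ : Form V := if w1 v = true then Form.var v else (Form.var v).neg with hγ
  have hγ1 : γ.eval w1 = true := by
    by_cases h : w1 v = true <;> simp [hγ, h, Form.eval, eval_neg]
  have hγ2 : γ.eval w2 = false := by
    by_cases h : w1 v = true
    · have : w2 v = false := by
        revert hv; rw [h]; cases w2 v <;> simp
      simp [hγ, h, Form.eval, this]
    · have h1 : w1 v = false := by revert h; cases w1 v <;> simp
      have : w2 v = true := by
        revert hv; rw [h1]; cases w2 v <;> simp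
      simp [hγ, h1, Form.eval, eval_neg, this]
  set α : Form V := (descr w2).neg with hα
  set β : Form V := (descr w1).neg with hβ
  have hsub : FMod α.neg ⊆ FMod β := by
    intro w hw
    have : (descr w2).eval w = true := by
      have := hw
      simp only [FMod, Set.mem_setOf_eq, hα, eval_neg, Bool.not_not] at this
      exact this
    have hww2 : w = w2 := (eval_descr _ _).1 this
    simp only [FMod, Set.mem_setOf_eq, hβ, eval_neg, Bool.not_eq_true']
    rw [Bool.eq_false_iff]
    intro hcon
    exact hne (((eval_descr _ _).1 hcon ▸ hww2 : w1 = w2))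
  obtain ⟨Ψ, hΨ⟩ := hU {descr w1} ⟨w1, by
    intro a ha
    rw [Set.mem_singleton_iff] at ha
    subst ha
    exact (eval_descr _ _).2 rfl⟩
  have hSM : SMod ({descr w1} : Set (Form V)) = {w1} := by
    ext w
    simp [SMod, eval_descr]
  have hBel : O.Bel Ψ = {φ : Form V | φ.eval w1 = true} := by
    rw [hΨ]
    ext φ
    simp [Cn, hSM]
  obtain ⟨hC1, hC2, hC3, -, -, -, -⟩ := hA
  have hβnot : β ∉ O.Bel Ψ := by
    rw [hBel]
    simp [hβ, eval_neg, (eval_descr w1 w1).2 rfl]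
  have hstep1 : γ ∈ O.Bel (O.op Ψ β) := hC2 Ψ β hβnot (by rw [hBel]; exact hγ1)
  have hstep2 : γ ∈ O.Bel (O.op (O.op Ψ α) β) := hIC Ψ α β γ hsub hstep1
  -- success: α not in Bel (Ψ ÷ α)
  have hαval : ¬ (∀ w, w ∈ FMod α) := by
    intro h
    have := h w2
    simp [FMod, hα, eval_neg, (eval_descr w2 w2).2 rfl] at this
  have hαnot : α ∉ O.Bel (O.op Ψ α) := hC3 Ψ α hαval
  have hw2mod : w2 ∈ SMod (O.Bel (O.op Ψ α)) := by
    rw [← O.closed (O.op Ψ α)] at hαnot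
    simp only [Cn, Set.mem_setOf_eq] at hαnot
    push_neg at hαnot
    obtain ⟨w, hw, hwα⟩ := hαnot
    have : (descr w2).eval w = true := by
      revert hwα
      simp [hα, eval_neg]
    rwa [(eval_descr _ _).1 this] at hw
  have hw2mod' : w2 ∈ SMod (O.Bel (O.op (O.op Ψ α) β)) := by
    intro a ha
    exact hw2mod a (hC1 (O.op Ψ α) β ha)
  have := hw2mod' γ hstep2
  rw [hγ2] at this
  exact Bool.false_ne_true this
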